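/- Let M be an n×n generalized tournament matrix and X, Y a bipartition of {1,…,n} with |X| ≥ 2 and |Y| ≥ 2. If rank(M[X,Y]) ≤ 1 and rank(M[Y,X]) ≤ 1, then X or Y is a nontrivial clan of M. -/

import Mathlib

lemma minor_eq_of_rank_le_one {α β : Type*} [Fintype α] [Fintype β] [DecidableEq α] [DecidableEq β]
    (A : Matrix α β ℝ) (h : A.rank ≤ 1) (i j : α) (k l : β) :
    A i k * A j l = A i l * A j k := by
  set R : Matrix (Fin 2) α ℝ := fun q p => if p = ![i, j] q then 1 else 0 with hR
  set C : Matrix β (Fin 2) ℝ := fun p q => if p = ![k, l] q then 1 else 0 with hC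
  set B : Matrix (Fin 2) (Fin 2) ℝ := R * A * C with hBdef
  have hB : ∀ p q, B p q = A (![i, j] p) (![k, l] q) := by
    intro p q
    simp only [hBdef, Matrix.mul_apply]
    simp [hR, hC, Finset.sum_ite_eq, mul_comm]
  have hrB : B.rank ≤ 1 := by
    calc B.rank ≤ (R * A).rank := Matrix.rank_mul_le_left _ _
    _ ≤ A.rank := Matrix.rank_mul_le_right _ _
    _ ≤ 1 := h
  have hdet : B.det = 0 := by
    by_contra hd
    have : IsUnit B := (Matrix.isUnit_iff_isUnit_det B).2 (isUnit_iff_ne_zero.2 hd)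
    have := Matrix.rank_of_isUnit B this
    simp [this] at hrB
  rw [Matrix.det_fin_two] at hdet
  have h00 := hB 0 0; have h01 := hB 0 1; have h10 := hB 1 0; have h11 := hB 1 1
  simp only [Matrix.cons_val_zero, Matrix.cons_val_one, Matrix.head_cons] at h00 h01 h10 h11
  rw [h00, h01, h10, h11] at hdet
  linarith

lemma real_dichotomy {a b c d : ℝ} (h1 : a + d = b + c) (h2 : a * d = b * c) :
    (a = b ∧ c = d) ∨ (a = c ∧ b = d) := by
  have : (a - b) * (a - c) = 0 := by linear_combination a * h1 - h2
  rcases mul_eq_zero.1 this with h | h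
  · left; constructor <;> linarith
  · right; constructor <;> linarith


def IsGTM {n : ℕ} (M : Matrix (Fin n) (Fin n) ℝ) : Prop :=
  (∀ i j, 0 ≤ M i j) ∧ M + M.transpose = (Matrix.of fun _ _ => (1 : ℝ)) - 1

/-- A clan of a matrix. -/
def IsClan {m : Type*} (M : Matrix m m ℝ) (X : Set m) : Prop :=
  ∀ i ∈ X, ∀ j ∈ X, ∀ k ∉ X, M i k = M j k ∧ M k i = M k j

theorem stmt2 {n : ℕ} (M : Matrix (Fin n) (Fin n) ℝ) (hM : IsGTM M)
    (X Y : Finset (Fin n)) (hdisj : Disjoint X Y) (hunion : X ∪ Y = Finset.univ)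
    (hX : 2 ≤ X.card) (hY : 2 ≤ Y.card)
    (hrXY : (M.submatrix (fun i : ↥X => (i : Fin n)) (fun j : ↥Y => (j : Fin n))).rank ≤ 1)
    (hrYX : (M.submatrix (fun i : ↥Y => (i : Fin n)) (fun j : ↥X => (j : Fin n))).rank ≤ 1) :
    (IsClan M (↑X : Set (Fin n)) ∧ (↑X : Set (Fin n)) ≠ Set.univ) ∨
      (IsClan M (↑Y : Set (Fin n)) ∧ (↑Y : Set (Fin n)) ≠ Set.univ) := by
  -- basic facts
  have hsum : ∀ i j : Fin n, i ≠ j → M i j + M j i = 1 := by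
    intro i j hij
    have := congrFun (congrFun hM.2 i) j
    simp [Matrix.one_apply_ne hij, Matrix.add_apply, Matrix.transpose_apply] at this
    linarith
  have hne : ∀ i ∈ X, ∀ k ∈ Y, i ≠ k := by
    intro i hi k hk h
    exact (Finset.disjoint_left.1 hdisj hi) (h ▸ hk)
  have hmemY : ∀ k, k ∉ X → k ∈ Y := by
    intro k hk
    have : k ∈ X ∪ Y := hunion ▸ Finset.mem_univ k
    rcases Finset.mem_union.1 this with h | h
    · exact absurd h hk
    · exact h
  have hmemX : ∀ k, k ∉ Y → k ∈ X := by
    intro k hk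
    have : k ∈ X ∪ Y := hunion ▸ Finset.mem_univ k
    rcases Finset.mem_union.1 this with h | h
    · exact h
    · exact absurd h hk
  -- minor conditions
  have P1 : ∀ i ∈ X, ∀ j ∈ X, ∀ k ∈ Y, ∀ l ∈ Y,
      M i k * M j l = M i l * M j k := by
    intro i hi j hj k hk l hl
    exact minor_eq_of_rank_le_one _ hrXY ⟨i, hi⟩ ⟨j, hj⟩ ⟨k, hk⟩ ⟨l, hl⟩
  have P2 : ∀ i ∈ X, ∀ j ∈ X, ∀ k ∈ Y, ∀ l ∈ Y,
      M k i * M l j = M k j * M l i := by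
    intro i hi j hj k hk l hl
    exact minor_eq_of_rank_le_one _ hrYX ⟨k, hk⟩ ⟨l, hl⟩ ⟨i, hi⟩ ⟨j, hj⟩
  have key : ∀ i ∈ X, ∀ j ∈ X, ∀ k ∈ Y, ∀ l ∈ Y,
      (M i k = M i l ∧ M j k = M j l) ∨ (M i k = M j k ∧ M i l = M j l) := by
    intro i hi j hj k hk l hl
    have e1 := P1 i hi j hj k hk l hl
    have e2 := P2 i hi j hj k hk l hl
    have ki : M k i = 1 - M i k := by have := hsum i k (hne i hi k hk); linarith
    have lj : M l j = 1 - M j l := by have := hsum j l (hne j hj l hl); linarith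
    have li : M l i = 1 - M i l := by have := hsum i l (hne i hi l hl); linarith
    have kj : M k j = 1 - M j k := by have := hsum j k (hne j hj k hk); linarith
    rw [ki, lj, li, kj] at e2
    have hadd : M i k + M j l = M i l + M j k := by nlinarith [e1]
    exact real_dichotomy hadd e1
  by_cases hrows : ∀ i ∈ X, ∀ j ∈ X, ∀ k ∈ Y, M i k = M j k
  · left
    constructor
    · intro i hi j hj k hk
      simp only [Finset.coe_mem, Finset.mem_coe] at *
      have hkY := hmemY k hk
      have h1 : M i k = M j k := hrows i hi j hj k hkY
      refine ⟨h1, ?_⟩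
      have := hsum i k (hne i hi k hkY)
      have := hsum j k (hne j hj k hkY)
      linarith
    · intro h
      obtain ⟨y, hy⟩ := Finset.card_pos.1 (by omega : 0 < Y.card)
      have : y ∈ (↑X : Set (Fin n)) := h ▸ Set.mem_univ y
      exact (Finset.disjoint_left.1 hdisj this) hy
  · right
    push_neg at hrows
    obtain ⟨i, hi, j, hj, k, hk, hneq⟩ := hrows
    -- row i of M[X,Y] is constant
    have hrowi : ∀ l ∈ Y, M i l = M i k := by
      intro l hl
      rcases key i hi j hj k hk l hl with ⟨h1, _⟩ | ⟨h1, _⟩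
      · exact h1.symm
      · exact absurd h1 hneq
    have hcols : ∀ p ∈ X, ∀ u ∈ Y, ∀ v ∈ Y, M p u = M p v := by
      intro p hp u hu v hv
      rcases key i hi p hp u hu v hv with ⟨_, h2⟩ | ⟨h1, h2⟩
      · exact h2
      · rw [← h1, ← h2, hrowi u hu, hrowi v hv]
    constructor
    · intro u hu v hv w hw
      simp only [Finset.mem_coe] at *
      have hwX := hmemX w hw
      have h2 : M w u = M w v := hcols w hwX u hu v hv
      refine ⟨?_, h2⟩
      have e1 := hsum w u (hne w hwX u hu)
      have e2 := hsum w v (hne w hwX v hv)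
      linarith
    · intro h
      obtain ⟨x, hx⟩ := Finset.card_pos.1 (by omega : 0 < X.card)
      have : x ∈ (↑Y : Set (Fin n)) := h ▸ Set.mem_univ x
      exact (Finset.disjoint_left.1 hdisj hx) this
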